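/- For every natural number k and every z ≠ 0: d^k/dz^k [H₋₁(z)/z] = 2·k!·∑_{i=0}^{⌊k/2⌋} 1/(i!·(k-2i)!) · H_{-k-1+i}(z)/(2z)^{i+1}, where H_ν is the Struve function of (possibly negative) integer order ν. -/

import Mathlib

set_option maxHeartbeats 1000000

open Real Finset Topology

/-- The Struve function of integer order `ν` (possibly negative). -/
noncomputable def struveH (ν : ℤ) (z : ℝ) : ℝ :=
  ∑' m : ℕ, (-1)^m * (z / 2)^(2 * (m : ℤ) + ν + 1) /
    (Real.Gamma ((m : ℝ) + 3/2) * Real.Gamma ((m : ℝ) + ν + 3/2))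


noncomputable def sG (ν : ℤ) (m : ℕ) : ℝ :=
  Real.Gamma ((m : ℝ) + 3/2) * Real.Gamma ((m : ℝ) + ν + 3/2)

lemma gamma_half_ne (j : ℤ) : Real.Gamma ((j : ℝ) + 1/2) ≠ 0 := by
  apply Real.Gamma_ne_zero
  intro n h
  have h2 : ((2*j + 1 : ℤ) : ℝ) = ((-(2*n) : ℤ) : ℝ) := by push_cast; linarith
  have := Int.cast_injective (α := ℝ) h2
  omega

lemma sG_ne_zero (ν : ℤ) (m : ℕ) : sG ν m ≠ 0 := by
  have h1 : Real.Gamma ((m : ℝ) + 3/2) ≠ 0 := by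
    have := gamma_half_ne (m + 1)
    push_cast at this ⊢
    convert this using 2
    ring
  have h2 : Real.Gamma ((m : ℝ) + ν + 3/2) ≠ 0 := by
    have := gamma_half_ne (m + ν + 1)
    push_cast at this ⊢
    convert this using 2
    ring
  exact mul_ne_zero h1 h2

lemma gamma_geq (j : ℕ) : (j.factorial : ℝ) * Real.Gamma (3/2) ≤ Real.Gamma ((j : ℝ) + 3/2) := by
  induction j with
  | zero => simp
  | succ j ih =>
    have hpos : (0:ℝ) < (j:ℝ) + 3/2 := by positivity
    have hrec : Real.Gamma (((j:ℝ) + 3/2) + 1) = ((j:ℝ) + 3/2) * Real.Gamma ((j:ℝ) + 3/2) :=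
      Real.Gamma_add_one hpos.ne'
    have hGpos : 0 < Real.Gamma ((j:ℝ) + 3/2) := Real.Gamma_pos_of_pos hpos
    have h1 : ((j:ℝ) + 1) * ((j.factorial : ℝ) * Real.Gamma (3/2)) ≤
        ((j:ℝ) + 3/2) * Real.Gamma ((j:ℝ) + 3/2) := by
      have := mul_le_mul_of_nonneg_left ih (by positivity : (0:ℝ) ≤ (j:ℝ)+1)
      nlinarith [Real.Gamma_pos_of_pos (by norm_num : (0:ℝ) < 3/2)]
    calc ((j+1).factorial : ℝ) * Real.Gamma (3/2)
        = ((j:ℝ)+1) * ((j.factorial : ℝ) * Real.Gamma (3/2)) := by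
          rw [Nat.factorial_succ]; push_cast; ring
      _ ≤ ((j:ℝ) + 3/2) * Real.Gamma ((j:ℝ) + 3/2) := h1
      _ = Real.Gamma (((j:ℕ)+1 : ℕ) + 3/2) := by rw [← hrec]; push_cast; ring_nf

lemma gamma_three_half_ge : (1/2 : ℝ) ≤ Real.Gamma (3/2) := by
  have h : Real.Gamma (3/2) = (1/2) * Real.Gamma (1/2) := by
    have := Real.Gamma_add_one (by norm_num : (1/2 : ℝ) ≠ 0)
    norm_num at this ⊢
    linarith
  rw [h, Real.Gamma_one_half_eq]
  nlinarith [Real.sqrt_le_sqrt (by nlinarith [Real.pi_gt_three] : (1:ℝ) ≤ π), Real.sqrt_one,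
    Real.sq_sqrt Real.pi_pos.le, Real.sqrt_nonneg π, Real.pi_gt_three]

lemma gamma_nat_ge (j : ℕ) : (1/2 : ℝ) ≤ Real.Gamma ((j : ℝ) + 3/2) := by
  have h1 := gamma_geq j
  have h2 : (1:ℝ) ≤ j.factorial := by exact_mod_cast Nat.one_le_iff_ne_zero.mpr j.factorial_ne_zero
  nlinarith [gamma_three_half_ge]

lemma sG_lower (ν : ℤ) (m : ℕ) :
    ∀ p : ℕ, ((p : ℤ) + ν ≥ 0) → (p.factorial : ℝ) / 4 ≤ |sG ν p| := by
  intro p hp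
  have h1 : (p.factorial : ℝ) * Real.Gamma (3/2) ≤ Real.Gamma ((p : ℝ) + 3/2) := gamma_geq p
  have h2 : (1/2 : ℝ) ≤ Real.Gamma ((p : ℝ) + ν + 3/2) := by
    have hj : (((( (p : ℤ) + ν).toNat : ℕ) : ℝ)) = (p : ℝ) + ν := by
      have := Int.toNat_of_nonneg hp
      exact_mod_cast congrArg (Int.cast : ℤ → ℝ) this
    have := gamma_nat_ge ((p : ℤ) + ν).toNat
    rwa [hj] at this
  have hfac : (1:ℝ) ≤ p.factorial := by exact_mod_cast Nat.one_le_iff_ne_zero.mpr p.factorial_ne_zero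
  have hG1 : (p.factorial : ℝ)/2 ≤ Real.Gamma ((p : ℝ) + 3/2) := by nlinarith [gamma_three_half_ge]
  have hpos : 0 ≤ sG ν p := by
    unfold sG; positivity
  rw [abs_of_nonneg hpos]
  unfold sG
  nlinarith

lemma summable_master (ν : ℤ) (R : ℝ) (hR : 0 ≤ R) :
    Summable (fun m : ℕ => ((m : ℝ) + 1) * R ^ m / |sG ν m|) := by
  set N := ν.natAbs with hN
  rw [← summable_nat_add_iff N]
  show Summable fun m : ℕ => (((m + N : ℕ) : ℝ) + 1) * R ^ (m + N) / |sG ν (m + N)|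
  have hkey : ∀ m : ℕ, ((m + N : ℕ) : ℝ) + 1 ≤ ((N : ℝ) + 1) * 2 ^ m := by
    intro m
    have h2 : (m : ℝ) + 1 ≤ 2 ^ m := by
      have : m < 2 ^ m := Nat.lt_two_pow_self
      exact_mod_cast this
    push_cast
    nlinarith [pow_nonneg (by norm_num : (0:ℝ) ≤ 2) m]
  apply Summable.of_nonneg_of_le (f := fun m => 4 * ((N : ℝ) + 1) * R ^ N * ((2*R) ^ m / m.factorial))
  · intro m; positivity
  · intro m
    have hsub : ((m + N : ℤ) + ν ≥ 0) := by
      have : (N : ℤ) + ν ≥ 0 := by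
        rw [hN]; omega
      omega
    have hlow := sG_lower ν (m+N) (m+N) (by exact_mod_cast hsub)
    have hGpos : (0:ℝ) < (m+N).factorial / 4 := by positivity
    have habs : (0:ℝ) < |sG ν (m+N)| := lt_of_lt_of_le hGpos hlow
    have hfacle : ((m.factorial : ℝ)) ≤ ((m+N).factorial : ℝ) := by
      exact_mod_cast Nat.factorial_le (by omega)
    have hlow2 : (m.factorial : ℝ) / 4 ≤ |sG ν (m+N)| := le_trans (by linarith) hlow
    calc (((m + N : ℕ) : ℝ) + 1) * R ^ (m+N) / |sG ν (m+N)|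
        ≤ (((N : ℝ) + 1) * 2 ^ m) * R ^ (m+N) / ((m.factorial : ℝ)/4) := by
          apply div_le_div₀ (by positivity) _ (by positivity) hlow2
          exact mul_le_mul_of_nonneg_right (hkey m) (by positivity)
      _ = 4 * ((N : ℝ) + 1) * R ^ N * ((2*R) ^ m / m.factorial) := by
          rw [pow_add, mul_pow]
          field_simp
  · exact (Real.summable_pow_div_factorial (2*R)).mul_left _

lemma abs_zpow' (x : ℝ) (n : ℤ) : |x ^ n| = |x| ^ n := by
  rcases n with n | n
  · simpa using abs_pow x n
  · simp [zpow_negSucc, abs_inv, abs_pow]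

lemma zpow_bound {a x b : ℝ} (ha : 0 < a) (hax : a ≤ x) (hxb : x ≤ b) (e : ℤ) :
    x ^ e ≤ b ^ e + a ^ e := by
  have hx : 0 < x := ha.trans_le hax
  have hb : 0 < b := hx.trans_le hxb
  rcases le_or_gt 0 e with he | he
  · have h1 : x ^ e ≤ b ^ e := by
      lift e to ℕ using he
      rw [zpow_natCast, zpow_natCast]
      exact pow_le_pow_left₀ hx.le hxb e
    have h2 : (0:ℝ) < a ^ e := zpow_pos ha e
    linarith
  · have hn : e = -((-e).toNat : ℤ) := by omega
    have h1 : x ^ e ≤ a ^ e := by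
      rw [hn, zpow_neg, zpow_neg, zpow_natCast, zpow_natCast]
      exact inv_anti₀ (pow_pos ha _) (pow_le_pow_left₀ ha.le hax _)
    have h2 : (0:ℝ) < b ^ e := zpow_pos hb e
    linarith

lemma zpow_split (a : ℝ) (ha : 0 < a) (e : ℤ) (m : ℕ) :
    a ^ (2 * (m:ℤ) + e) = a ^ e * (a^2) ^ m := by
  rw [zpow_add₀ ha.ne', mul_comm]
  congr 1
  rw [show (2*(m:ℤ)) = ((2*m : ℕ) : ℤ) by push_cast; ring, zpow_natCast, pow_mul]

lemma summable_term (ν : ℤ) {z : ℝ} (hz : z ≠ 0) :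
    Summable (fun m : ℕ => (-1:ℝ)^m * (z/2)^(2*(m:ℤ)+ν+1) / sG ν m) := by
  have hz2 : z/2 ≠ 0 := by simpa using hz
  have habs : (0:ℝ) < |z/2| := abs_pos.mpr hz2
  apply Summable.of_norm
  apply Summable.of_nonneg_of_le (f := fun m : ℕ =>
      (|z/2| ^ (ν+1) ) * (((m:ℝ)+1) * (|z/2|^2) ^ m / |sG ν m|))
    (fun m => norm_nonneg _)
  · intro m
    have h1 : ‖(-1:ℝ)^m * (z/2)^(2*(m:ℤ)+ν+1) / sG ν m‖
        = |z/2| ^ (2*(m:ℤ)+ν+1) / |sG ν m| := by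
      rw [Real.norm_eq_abs, abs_div, abs_mul, abs_pow, abs_neg, abs_one, one_pow, one_mul,
        abs_zpow']
    rw [h1]
    have h2 : |z/2| ^ (2*(m:ℤ)+ν+1) = |z/2| ^ (ν+1) * (|z/2|^2) ^ m := by
      have : 2*(m:ℤ)+ν+1 = 2*(m:ℤ)+(ν+1) := by ring
      rw [this, zpow_split _ habs]
    rw [h2, mul_div_assoc]
    apply mul_le_mul_of_nonneg_left _ (le_of_lt (zpow_pos habs _))
    have hG := abs_pos.mpr (sG_ne_zero ν m)
    rw [div_le_div_iff₀ hG hG]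
    nlinarith [mul_nonneg (Nat.cast_nonneg m : (0:ℝ) ≤ m)
      (mul_nonneg (pow_nonneg (sq_nonneg (|z/2|)) m) hG.le)]
  · exact (summable_master ν (|z/2|^2) (sq_nonneg _)).mul_left _

lemma struveH_eq (ν : ℤ) (z : ℝ) :
    struveH ν z = ∑' m : ℕ, (-1:ℝ)^m * (z/2)^(2*(m:ℤ)+ν+1) / sG ν m := rfl

lemma struveH_hasDerivAt (ν : ℤ) {z : ℝ} (hz : z ≠ 0) :
    HasDerivAt (struveH ν) (struveH (ν-1) z - ν * struveH ν z / z) z := by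
  have hza : (0:ℝ) < |z| := abs_pos.mpr hz
  set t : Set ℝ := Metric.ball z (|z|/2) with ht_def
  have ht : IsOpen t := Metric.isOpen_ball
  have h't : IsPreconnected t := (convex_ball z (|z|/2)).isPreconnected
  have hzt : z ∈ t := Metric.mem_ball_self (by positivity)
  have hmem : ∀ x ∈ t, |z|/4 ≤ |x/2| ∧ |x/2| ≤ 3*|z|/4 := by
    intro x hx
    rw [ht_def, Metric.mem_ball, Real.dist_eq] at hx
    have h1 : |x| ≥ |z| - |x - z| := by
      have := abs_sub_abs_le_abs_sub z x
      have h2 : |z - x| = |x - z| := abs_sub_comm z x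
      linarith
    have h2 : |x| ≤ |z| + |x - z| := by
      have h3 := abs_add_le (x - z) z
      rw [sub_add_cancel] at h3
      linarith
    constructor
    · rw [abs_div]; norm_num; linarith
    · rw [abs_div]; norm_num; linarith
  have hxne : ∀ x ∈ t, x ≠ 0 := by
    intro x hx h0
    rcases hmem x hx with ⟨h1, _⟩
    rw [h0] at h1
    simp at h1
    linarith
  -- the terms and their derivatives
  set g : ℕ → ℝ → ℝ := fun m y => (-1:ℝ)^m * (y/2)^(2*(m:ℤ)+ν+1) / sG ν m with hg_def
  set g' : ℕ → ℝ → ℝ := fun m x =>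
    (-1:ℝ)^m * (((2*(m:ℤ)+ν+1 : ℤ) : ℝ) * (x/2)^(2*(m:ℤ)+ν) / 2) / sG ν m with hg'_def
  have hg : ∀ m : ℕ, ∀ x ∈ t, HasDerivAt (g m) (g' m x) x := by
    intro m x hx
    have hx0 : x ≠ 0 := hxne x hx
    have hx2 : x/2 ≠ 0 := div_ne_zero hx0 two_ne_zero
    have h1 : HasDerivAt (fun y : ℝ => y/2) (1/2) x := by
      simpa using (hasDerivAt_id x).div_const 2
    have h2 : HasDerivAt (fun y : ℝ => (y/2)^(2*(m:ℤ)+ν+1))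
        (((2*(m:ℤ)+ν+1 : ℤ) : ℝ) * (x/2)^(2*(m:ℤ)+ν+1-1) * (1/2)) x :=
      HasDerivAt.comp x (hasDerivAt_zpow _ _ (Or.inl hx2)) h1
    have h3 := (h2.const_mul ((-1:ℝ)^m)).div_const (sG ν m)
    refine h3.congr_deriv ?_
    rw [hg'_def]
    have he : 2*(m:ℤ)+ν+1-1 = 2*(m:ℤ)+ν := by ring
    rw [he]
    ring
  -- the uniform bound
  set u : ℕ → ℝ := fun m =>
    (2*(m:ℝ) + |(ν:ℝ)| + 1) * ((3*|z|/4) ^ (2*(m:ℤ)+ν) + (|z|/4) ^ (2*(m:ℤ)+ν))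
      / (2 * |sG ν m|) with hu_def
  have hg' : ∀ m : ℕ, ∀ x ∈ t, ‖g' m x‖ ≤ u m := by
    intro m x hx
    rcases hmem x hx with ⟨h1, h2⟩
    have hG := abs_pos.mpr (sG_ne_zero ν m)
    have hnorm : ‖g' m x‖ =
        |((2*(m:ℤ)+ν+1 : ℤ) : ℝ)| * |x/2| ^ (2*(m:ℤ)+ν) / (2 * |sG ν m|) := by
      rw [hg'_def]
      simp only [Real.norm_eq_abs, abs_div, abs_mul, abs_pow, abs_neg, abs_one, one_pow, one_mul,
        abs_zpow']
      rw [abs_of_nonneg (by norm_num : (0:ℝ) ≤ 2)]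
      ring
    rw [hnorm, hu_def]
    apply div_le_div₀ (by positivity) _ (by positivity) le_rfl
    have hb1 : |((2*(m:ℤ)+ν+1 : ℤ) : ℝ)| ≤ 2*(m:ℝ) + |(ν:ℝ)| + 1 := by
      push_cast
      have := abs_add_le (2*(m:ℝ) + 1) (ν:ℝ)
      have h0 : |2*(m:ℝ)+1| = 2*(m:ℝ)+1 := abs_of_nonneg (by positivity)
      calc |2*(m:ℝ) + (ν:ℝ) + 1| = |(2*(m:ℝ)+1) + (ν:ℝ)| := by ring_nf
        _ ≤ |2*(m:ℝ)+1| + |(ν:ℝ)| := abs_add_le _ _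
        _ = 2*(m:ℝ) + |(ν:ℝ)| + 1 := by rw [h0]; ring
    have hb2 : |x/2| ^ (2*(m:ℤ)+ν) ≤ (3*|z|/4) ^ (2*(m:ℤ)+ν) + (|z|/4) ^ (2*(m:ℤ)+ν) := by
      exact zpow_bound (by positivity) h1 h2 _
    have hpos1 : (0:ℝ) ≤ |x/2| ^ (2*(m:ℤ)+ν) := le_of_lt (zpow_pos (lt_of_lt_of_le (by positivity) h1) _)
    exact mul_le_mul hb1 hb2 hpos1 (by positivity)
  have hu : Summable u := by
    apply Summable.of_nonneg_of_le (fun m => by rw [hu_def]; positivity)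
      (f := fun m : ℕ =>
        ((|(ν:ℝ)| + 3) * (3*|z|/4) ^ ν / 2) * (((m:ℝ)+1) * ((3*|z|/4)^2) ^ m / |sG ν m|)
        + ((|(ν:ℝ)| + 3) * (|z|/4) ^ ν / 2) * (((m:ℝ)+1) * ((|z|/4)^2) ^ m / |sG ν m|))
    · intro m
      rw [hu_def]
      beta_reduce
      have hG := abs_pos.mpr (sG_ne_zero ν m)
      have hs1 : (3*|z|/4) ^ (2*(m:ℤ)+ν) = (3*|z|/4) ^ ν * ((3*|z|/4)^2) ^ m :=
        zpow_split _ (by positivity) ν m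
      have hs2 : (|z|/4) ^ (2*(m:ℤ)+ν) = (|z|/4) ^ ν * ((|z|/4)^2) ^ m :=
        zpow_split _ (by positivity) ν m
      rw [hs1, hs2]
      have hcoef : 2*(m:ℝ) + |(ν:ℝ)| + 1 ≤ (|(ν:ℝ)| + 3) * ((m:ℝ)+1) := by
        have : (0:ℝ) ≤ |(ν:ℝ)| := abs_nonneg _
        have hm : (0:ℝ) ≤ (m:ℝ) := Nat.cast_nonneg m
        nlinarith
      have e1 : (0:ℝ) < (3*|z|/4) ^ ν := zpow_pos (by positivity) ν
      have e2 : (0:ℝ) < (|z|/4) ^ ν := zpow_pos (by positivity) ν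
      have p1 : (0:ℝ) ≤ ((3*|z|/4)^2) ^ m := by positivity
      have p2 : (0:ℝ) ≤ ((|z|/4)^2) ^ m := by positivity
      have hR : (|(ν:ℝ)| + 3) * (3*|z|/4) ^ ν / 2 * (((m:ℝ)+1) * ((3*|z|/4)^2) ^ m / |sG ν m|)
          + (|(ν:ℝ)| + 3) * (|z|/4) ^ ν / 2 * (((m:ℝ)+1) * ((|z|/4)^2) ^ m / |sG ν m|)
          = ((|(ν:ℝ)| + 3) * ((m:ℝ)+1)) *
              ((3*|z|/4) ^ ν * ((3*|z|/4)^2) ^ m + (|z|/4) ^ ν * ((|z|/4)^2) ^ m)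
            / (2 * |sG ν m|) := by
        field_simp
      rw [hR]
      gcongr (?_ : ℝ) / (2 * |sG ν m|)
      nlinarith [mul_nonneg e1.le p1, mul_nonneg e2.le p2,
        mul_nonneg (mul_nonneg e1.le p1) (by linarith [abs_nonneg (ν:ℝ), Nat.cast_nonneg (α := ℝ) m] : (0:ℝ) ≤ (|(ν:ℝ)|+3)*((m:ℝ)+1) - (2*(m:ℝ)+|(ν:ℝ)|+1)),
        mul_nonneg (mul_nonneg e2.le p2) (by linarith [abs_nonneg (ν:ℝ), Nat.cast_nonneg (α := ℝ) m] : (0:ℝ) ≤ (|(ν:ℝ)|+3)*((m:ℝ)+1) - (2*(m:ℝ)+|(ν:ℝ)|+1))]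
    · exact ((summable_master ν ((3*|z|/4)^2) (by positivity)).mul_left _).add
        ((summable_master ν ((|z|/4)^2) (by positivity)).mul_left _)
  -- apply the tsum derivative theorem
  have hg0 : Summable (fun m => g m z) := summable_term ν hz
  have hmain := hasDerivAt_tsum_of_isPreconnected hu ht h't hg hg' hzt hg0 hzt
  have hfun : (fun y => ∑' m, g m y) = struveH ν := rfl
  rw [hfun] at hmain
  -- identify the derivative value
  have hval : ∑' m, g' m z = struveH (ν-1) z - ν * struveH ν z / z := by
    have hz2 : z/2 ≠ 0 := div_ne_zero hz two_ne_zero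
    have key : ∀ m : ℕ, g' m z =
        (-1:ℝ)^m * (z/2)^(2*(m:ℤ)+(ν-1)+1) / sG (ν-1) m
          - ((ν:ℝ)/z) * ((-1:ℝ)^m * (z/2)^(2*(m:ℤ)+ν+1) / sG ν m) := by
      intro m
      have hne1 : (m:ℝ) + ν + 1/2 ≠ 0 := by
        intro h
        have hInt : ((2*(m:ℤ)+2*ν+1 : ℤ) : ℝ) ≠ 0 := by
          exact_mod_cast (by omega : (2*(m:ℤ)+2*ν+1) ≠ 0)
        apply hInt
        push_cast
        linarith
      have hGrec : Real.Gamma ((m:ℝ) + ν + 3/2) = ((m:ℝ)+ν+1/2) * Real.Gamma ((m:ℝ)+ν+1/2) := by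
        rw [show (m:ℝ) + ν + 3/2 = ((m:ℝ)+ν+1/2) + 1 by ring, Real.Gamma_add_one hne1]
      have hexp : (z/2)^(2*(m:ℤ)+ν+1) = (z/2)^(2*(m:ℤ)+ν) * (z/2) := by
        rw [show 2*(m:ℤ)+ν+1 = (2*(m:ℤ)+ν)+1 by ring, zpow_add_one₀ hz2]
      have hexp2 : 2*(m:ℤ)+(ν-1)+1 = 2*(m:ℤ)+ν := by ring
      have hΓ1 : Real.Gamma ((m:ℝ)+3/2) ≠ 0 := by
        have := gamma_half_ne (m + 1)
        push_cast at this ⊢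
        convert this using 2
        all_goals ring
      have hΓ2 : Real.Gamma ((m:ℝ)+ν+1/2) ≠ 0 := by
        have := gamma_half_ne (m + ν)
        push_cast at this ⊢
        convert this using 2
        all_goals ring
      have fieldkey : ∀ (C A w Γa Γb nu zz : ℝ), zz ≠ 0 → Γa ≠ 0 → Γb ≠ 0 → w ≠ 0 →
          C * ((2*w - nu) * A / 2) / (Γa * (w * Γb))
            = C * A / (Γa * Γb) - (nu/zz) * (C * (A * (zz/2)) / (Γa * (w * Γb))) := by
        intro C A w Γa Γb nu zz h1 h2 h3 h4
        field_simp
      rw [hg'_def]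
      beta_reduce
      rw [hexp2]
      unfold sG
      rw [hexp, hGrec, show (m:ℝ) + ((ν:ℤ)-1 : ℤ) + 3/2 = (m:ℝ)+ν+1/2 by push_cast; ring,
        show (((2*(m:ℤ)+ν+1 : ℤ)):ℝ) = 2*((m:ℝ)+ν+1/2) - ν by push_cast; ring]
      exact fieldkey _ _ _ _ _ _ _ hz hΓ1 hΓ2 hne1
    calc ∑' m, g' m z
        = ∑' m : ℕ, ((-1:ℝ)^m * (z/2)^(2*(m:ℤ)+(ν-1)+1) / sG (ν-1) m
          - ((ν:ℝ)/z) * ((-1:ℝ)^m * (z/2)^(2*(m:ℤ)+ν+1) / sG ν m)) := tsum_congr key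
      _ = (∑' m : ℕ, (-1:ℝ)^m * (z/2)^(2*(m:ℤ)+(ν-1)+1) / sG (ν-1) m)
          - ∑' m : ℕ, ((ν:ℝ)/z) * ((-1:ℝ)^m * (z/2)^(2*(m:ℤ)+ν+1) / sG ν m) :=
            Summable.tsum_sub (summable_term (ν-1) hz)
              ((summable_term ν hz).mul_left ((ν:ℝ)/z))
      _ = struveH (ν-1) z - ((ν:ℝ)/z) * struveH ν z := by
            rw [tsum_mul_left, struveH_eq, struveH_eq]
      _ = struveH (ν-1) z - ν * struveH ν z / z := by ring
  rwa [hval] at hmain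

lemma hasDerivAt_T (ν : ℤ) (i : ℕ) {z : ℝ} (hz : z ≠ 0) :
    HasDerivAt (fun x => struveH ν x / (2*x)^(i+1))
      (struveH (ν-1) z / (2*z)^(i+1) - (2*(ν:ℝ) + 2*(i+1)) * (struveH ν z / (2*z)^(i+2))) z := by
  have h2z : 2*z ≠ 0 := by simp [hz]
  have hP : (2*z)^(i+1) ≠ 0 := pow_ne_zero _ h2z
  have hH := struveH_hasDerivAt ν hz
  have hlin : HasDerivAt (fun x : ℝ => 2*x) 2 z := by
    simpa using (hasDerivAt_id z).const_mul 2
  have hpow : HasDerivAt (fun x : ℝ => (2*x)^(i+1)) ((i+1 : ℕ) * (2*z)^i * 2) z := hlin.pow (i+1)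
  have hdiv := hH.div hpow hP
  refine hdiv.congr_deriv ?_
  have hsplit : (2*z)^(i+2) = (2*z)^(i+1) * (2*z) := by ring
  have hsq : ((2*z)^(i+1))^2 = (2*z)^(i+1) * (2*z)^(i+1) := sq _
  have hpe : (2*z)^(i+1) = (2*z)^i * (2*z) := by ring
  field_simp
  push_cast
  ring

noncomputable def C (k i : ℕ) : ℝ := 1 / ((i.factorial : ℝ) * ((k - 2*i).factorial : ℝ))

lemma coeff_id (k j b : ℕ) (hb : k = 2*j + (b+2)) :
    C k (j+1) + 2*((k:ℝ) - 2*j) * C k j = ((k:ℝ)+1) * C (k+1) (j+1) := by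
  have h1 : k - 2*(j+1) = b := by omega
  have h2 : k - 2*j = b + 2 := by omega
  have h3 : k + 1 - 2*(j+1) = b + 1 := by omega
  unfold C
  rw [h1, h2, h3]
  have e1 : ((j+1).factorial : ℝ) = (j+1) * j.factorial := by
    rw [Nat.factorial_succ]; push_cast; ring
  have e2 : ((b+2).factorial : ℝ) = (b+2) * ((b+1) * b.factorial) := by
    rw [Nat.factorial_succ, Nat.factorial_succ]; push_cast; ring
  have e3 : ((b+1).factorial : ℝ) = (b+1) * b.factorial := by
    rw [Nat.factorial_succ]; push_cast; ring
  have hk : (k:ℝ) = 2*j + b + 2 := by rw [hb]; push_cast; ring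
  rw [e1, e2, e3, hk]
  have p1 : (0:ℝ) < j.factorial := by exact_mod_cast j.factorial_pos
  have p2 : (0:ℝ) < b.factorial := by exact_mod_cast b.factorial_pos
  field_simp
  ring

lemma czero (k : ℕ) : ((k:ℝ)+1) * C (k+1) 0 = C k 0 := by
  unfold C
  simp only [Nat.mul_zero, Nat.sub_zero, Nat.factorial_zero, Nat.cast_one, one_mul]
  rw [Nat.factorial_succ]
  push_cast
  have p1 : (0:ℝ) < k.factorial := by exact_mod_cast k.factorial_pos
  field_simp

lemma sum_step (k : ℕ) (q : ℕ → ℝ) :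
    ((k:ℝ)+1) * ∑ j ∈ Finset.range ((k+1)/2+1), C (k+1) j * q j
    = ∑ i ∈ Finset.range (k/2+1), C k i * (q i + 2*((k:ℝ)-2*i) * q (i+1)) := by
  have expand : ∀ n : ℕ, ∑ i ∈ Finset.range (n+1), C k i * (q i + 2*((k:ℝ)-2*i) * q (i+1))
      = ∑ i ∈ Finset.range (n+1), C k i * q i
        + ∑ i ∈ Finset.range (n+1), (2*((k:ℝ)-2*i) * C k i) * q (i+1) := by
    intro n
    rw [← Finset.sum_add_distrib]
    apply Finset.sum_congr rfl
    intro i _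
    ring
  rcases Nat.even_or_odd k with ⟨n, hn⟩ | ⟨n, hn⟩
  · -- k = 2n
    have hk : k = 2*n := by omega
    have hr1 : k/2 = n := by omega
    have hr2 : (k+1)/2 = n := by omega
    rw [hr1, hr2, expand n]
    rw [Finset.mul_sum]
    rw [Finset.sum_range_succ' (fun j => ((k:ℝ)+1) * (C (k+1) j * q j)) n]
    rw [Finset.sum_range_succ' (fun i => C k i * q i) n]
    rw [Finset.sum_range_succ (fun i => (2*((k:ℝ)-2*i) * C k i) * q (i+1)) n]
    have hdn : (2*((k:ℝ)-2*n) * C k n) * q (n+1) = 0 := by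
      have : (k:ℝ) - 2*n = 0 := by rw [hk]; push_cast; ring
      rw [this]; ring
    rw [hdn, add_zero]
    have hcomb : ∀ j ∈ Finset.range n,
        ((k:ℝ)+1) * (C (k+1) (j+1) * q (j+1))
          = C k (j+1) * q (j+1) + (2*((k:ℝ)-2*j) * C k j) * q (j+1) := by
      intro j hj
      rw [Finset.mem_range] at hj
      have := coeff_id k j (2*(n-1-j)) (by omega)
      linear_combination (-1 : ℝ) * q (j+1) * this
    rw [Finset.sum_congr rfl hcomb, Finset.sum_add_distrib]
    linear_combination q 0 * czero k
  · -- k = 2n+1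
    have hk : k = 2*n+1 := hn
    have hr1 : k/2 = n := by omega
    have hr2 : (k+1)/2 = n+1 := by omega
    rw [hr1, hr2, expand n]
    rw [Finset.mul_sum]
    rw [Finset.sum_range_succ' (fun j => ((k:ℝ)+1) * (C (k+1) j * q j)) (n+1)]
    rw [Finset.sum_range_succ (fun j => ((k:ℝ)+1) * (C (k+1) (j+1) * q (j+1))) n]
    rw [Finset.sum_range_succ' (fun i => C k i * q i) n]
    rw [Finset.sum_range_succ (fun i => (2*((k:ℝ)-2*i) * C k i) * q (i+1)) n]
    have htop : ((k:ℝ)+1) * (C (k+1) (n+1) * q (n+1)) = (2*((k:ℝ)-2*n) * C k n) * q (n+1) := by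
      have h1 : (k+1) - 2*(n+1) = 0 := by omega
      have h2 : k - 2*n = 1 := by omega
      unfold C
      rw [h1, h2]
      have hkr : (k:ℝ) = 2*n+1 := by rw [hk]; push_cast; ring
      have e1 : ((n+1).factorial : ℝ) = (n+1) * n.factorial := by
        rw [Nat.factorial_succ]; push_cast; ring
      rw [hkr, e1]
      have p1 : (0:ℝ) < n.factorial := by exact_mod_cast n.factorial_pos
      simp only [Nat.factorial_zero, Nat.factorial_one, Nat.cast_one, mul_one, one_mul]
      field_simp
      ring
    have hcomb : ∀ j ∈ Finset.range n,
        ((k:ℝ)+1) * (C (k+1) (j+1) * q (j+1))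
          = C k (j+1) * q (j+1) + (2*((k:ℝ)-2*j) * C k j) * q (j+1) := by
      intro j hj
      rw [Finset.mem_range] at hj
      have := coeff_id k j (2*(n-1-j)+1) (by omega)
      linear_combination (-1 : ℝ) * q (j+1) * this
    rw [Finset.sum_congr rfl hcomb, Finset.sum_add_distrib]
    linear_combination q 0 * czero k + htop

/-- for every `k : ℕ` and `z ≠ 0`,
`d^k/dz^k [H₋₁(z)/z] = 2 k! ∑_{i=0}^{⌊k/2⌋} 1/(i!(k-2i)!) · H_{-k-1+i}(z)/(2z)^{i+1}`. -/
theorem iteratedDeriv_struveHneg1div (k : ℕ) (z : ℝ) (hz : z ≠ 0) :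
    iteratedDeriv k (fun x => struveH (-1) x / x) z =
      2 * (k.factorial : ℝ) *
        ∑ i ∈ Finset.range (k / 2 + 1),
          1 / ((i.factorial : ℝ) * ((k - 2 * i).factorial : ℝ)) *
            (struveH (-(k : ℤ) - 1 + i) z / (2 * z)^(i + 1)) := by
  induction k generalizing z hz with
  | zero =>
    rw [iteratedDeriv_zero]
    norm_num [Finset.sum_range_one]
    field_simp
  | succ k ih =>
    rw [iteratedDeriv_succ]
    have hev : ∀ᶠ x in 𝓝 z, x ≠ 0 :=
      IsOpen.eventually_mem isOpen_ne (show z ∈ {x : ℝ | x ≠ 0} from hz)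
    have hEq : iteratedDeriv k (fun x => struveH (-1) x / x) =ᶠ[𝓝 z]
        (fun x => 2 * (k.factorial : ℝ) *
          ∑ i ∈ Finset.range (k / 2 + 1),
            1 / ((i.factorial : ℝ) * ((k - 2 * i).factorial : ℝ)) *
              (struveH (-(k : ℤ) - 1 + i) x / (2 * x)^(i + 1))) := by
      filter_upwards [hev] with x hx
      exact ih x hx
    rw [hEq.deriv_eq]
    set q : ℕ → ℝ := fun j => struveH (-((k+1 : ℕ) : ℤ) - 1 + j) z / (2*z)^(j+1) with hq_def
    have hterm : ∀ i ∈ Finset.range (k/2+1),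
        HasDerivAt (fun x => 1 / ((i.factorial : ℝ) * ((k - 2 * i).factorial : ℝ)) *
            (struveH (-(k : ℤ) - 1 + i) x / (2 * x)^(i + 1)))
          (1 / ((i.factorial : ℝ) * ((k - 2 * i).factorial : ℝ)) *
            (struveH ((-(k : ℤ) - 1 + i) - 1) z / (2*z)^(i+1)
              - (2*(((-(k : ℤ) - 1 + i) : ℤ) : ℝ) + 2*(i+1)) *
                  (struveH (-(k : ℤ) - 1 + i) z / (2*z)^(i+2)))) z :=
      fun i _ => HasDerivAt.const_mul _ (hasDerivAt_T (-(k : ℤ) - 1 + i) i hz)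
    have hsum := HasDerivAt.fun_sum hterm
    have hF' := HasDerivAt.const_mul (2 * (k.factorial : ℝ)) hsum
    rw [hF'.deriv]
    have hmem2 : ∀ i, i ∈ Finset.range (k/2+1) → 2*i ≤ k := by
      intro i hi
      rw [Finset.mem_range] at hi
      omega
    have hq : ∀ i ∈ Finset.range (k/2+1),
        1 / ((i.factorial : ℝ) * ((k - 2 * i).factorial : ℝ)) *
            (struveH ((-(k : ℤ) - 1 + i) - 1) z / (2*z)^(i+1)
              - (2*(((-(k : ℤ) - 1 + i) : ℤ) : ℝ) + 2*(i+1)) *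
                  (struveH (-(k : ℤ) - 1 + i) z / (2*z)^(i+2)))
          = C k i * (q i + 2*((k:ℝ)-2*i) * q (i+1)) := by
      intro i hi
      rw [hq_def]
      simp only [C]
      rw [show ((-(k : ℤ) - 1 + i) - 1) = (-((k+1 : ℕ) : ℤ) - 1 + (i : ℕ)) by push_cast; ring,
        show (-(k : ℤ) - 1 + (i:ℕ)) = (-((k+1 : ℕ) : ℤ) - 1 + ((i+1 : ℕ) : ℤ)) by push_cast; ring]
      push_cast
      ring
    rw [Finset.sum_congr rfl hq, ← sum_step k q]
    rw [Nat.factorial_succ]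
    have hC : ∀ j, C (k+1) j = 1 / ((j.factorial : ℝ) * (((k+1) - 2*j).factorial : ℝ)) :=
      fun j => rfl
    rw [hq_def]
    simp only [C]
    push_cast
    ring
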